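/- There exist pre-Hilbert spaces G, H (both with orthonormal Hamel basis (e_n)_{n∈ℕ}) and K = ℂ, and linear operators a : G → H, b : H → K, with a*e_n := n e_n and b e_n := 1/n, such that both a and b are (weakly) adjointable but the composition c = b ∘ a : e_n ↦ 1 is unbounded on its domain and is not closeable (in particular not weakly adjointable). -/

import Mathlib

open scoped InnerProductSpace

section Aux

open Finset

variable {H : Type*} [NormedAddCommGroup H] [InnerProductSpace ℂ H]

/-- Norm squared of a finite orthonormal combination. -/
lemma aux_norm_sq_sum {ι : Type*} {v : ι → H} (hv : Orthonormal ℂ v) (l : ι → ℂ)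
    (s : Finset ι) : ‖∑ i ∈ s, l i • v i‖ ^ 2 = ∑ i ∈ s, ‖l i‖ ^ 2 := by
  have h := hv.inner_sum l l s
  have h2 : RCLike.re ⟪∑ i ∈ s, l i • v i, ∑ i ∈ s, l i • v i⟫_ℂ
      = ‖∑ i ∈ s, l i • v i‖ ^ 2 := inner_self_eq_norm_sq _
  rw [h] at h2
  rw [← h2]
  rw [map_sum]
  refine Finset.sum_congr rfl fun i _ => ?_
  rw [RCLike.conj_mul]
  norm_cast

end Aux

/-- On a pre-Hilbert space `H = span{e_n : n ≥ 1}` with orthonormal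
(Hamel) basis `(e_n)` consider the linear operators `a : H → H`, `a e_n = n e_n`, and
`b : H → ℂ`, `b e_n = 1/n`.  Then `a` is weakly adjointable (indeed symmetric) and `b` is
weakly adjointable (indeed bounded), but the composition `c = b ∘ a : e_n ↦ 1` is
unbounded—hence not weakly adjointable—and moreover not closeable: there is a sequence
`x_k → 0` with `c x_k → 1 ≠ 0`. -/
theorem comp_of_adjointable_not_closeable {H : Type*} [NormedAddCommGroup H]
    [InnerProductSpace ℂ H] (e : ℕ+ → H) (he : Orthonormal ℂ e)
    (hspan : Submodule.span ℂ (Set.range e) = ⊤)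
    (a : H →ₗ[ℂ] H) (ha : ∀ n : ℕ+, a (e n) = (n : ℂ) • e n)
    (b : H →ₗ[ℂ] ℂ) (hb : ∀ n : ℕ+, b (e n) = 1 / (n : ℂ)) :
    (∀ x y : H, ⟪a x, y⟫_ℂ = ⟪x, a y⟫_ℂ) ∧
    (∃ C : ℝ, ∀ x : H, ‖b x‖ ≤ C * ‖x‖) ∧
    (¬ ∃ C : ℝ, ∀ x : H, ‖b (a x)‖ ≤ C * ‖x‖) ∧
    (∃ x : ℕ → H, Filter.Tendsto x Filter.atTop (nhds 0) ∧
      Filter.Tendsto (fun k => b (a (x k))) Filter.atTop (nhds 1) ∧ (1 : ℂ) ≠ 0) := by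
  classical
  have hmem : ∀ x : H, x ∈ Submodule.span ℂ (Set.range e) := by
    intro x; rw [hspan]; trivial
  have hite := orthonormal_iff_ite.mp he
  have hcast : ∀ n : ℕ+, ((n : ℕ) : ℂ) ≠ 0 := fun n => by
    exact_mod_cast (Nat.cast_ne_zero (R := ℂ)).mpr n.pos.ne'
  -- the composition on basis vectors
  have hc : ∀ n : ℕ+, b (a (e n)) = 1 := by
    intro n
    rw [ha n, map_smul, hb n]
    rw [smul_eq_mul, mul_one_div_cancel (hcast n)]
  -- an auxiliary injection ℕ → ℕ+
  set f : ℕ → ℕ+ := fun n => ⟨n + 1, n.succ_pos⟩ with hf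
  have hfinj : Function.Injective f := by
    intro m n h
    simpa [hf] using congrArg PNat.val h
  have hef : Orthonormal ℂ (e ∘ f) := he.comp f hfinj
  -- the test vectors x_N = ∑_{n < N} e (f n)
  set X : ℕ → H := fun N => ∑ n ∈ Finset.range N, e (f n) with hX
  have hXnorm : ∀ N : ℕ, ‖X N‖ ^ 2 = N := by
    intro N
    have := aux_norm_sq_sum hef (fun _ => (1 : ℂ)) (Finset.range N)
    simpa [hX] using this
  have hXc : ∀ N : ℕ, b (a (X N)) = N := by
    intro N
    simp only [hX, map_sum]
    rw [Finset.sum_congr rfl fun n _ => hc (f n)]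
    simp
  refine ⟨?_, ?_, ?_, ?_⟩
  · -- symmetry of a
    intro x y
    induction hmem x using Submodule.span_induction with
    | mem x hx =>
      obtain ⟨m, rfl⟩ := hx
      induction hmem y using Submodule.span_induction with
      | mem y hy =>
        obtain ⟨n, rfl⟩ := hy
        rw [ha m, ha n, inner_smul_left, inner_smul_right, hite m n]
        by_cases h : m = n
        · subst h; simp
        · simp [h]
      | zero => simp
      | add u v hu hv ihu ihv =>
        rw [map_add, inner_add_right, inner_add_right, ihu, ihv]
      | smul c u hu ihu =>
        rw [map_smul, inner_smul_right, inner_smul_right, ihu]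
    | zero => simp
    | add u v hu hv ihu ihv =>
      rw [map_add, inner_add_left, inner_add_left, ihu, ihv]
    | smul c u hu ihu =>
      rw [map_smul, inner_smul_left, inner_smul_left, ihu]
  · -- boundedness of b
    have hsum : Summable (fun n : ℕ+ => 1 / ((n : ℕ) : ℝ) ^ 2) := by
      have h0 : Summable (fun n : ℕ => 1 / (n : ℝ) ^ 2) :=
        Real.summable_one_div_nat_pow.mpr one_lt_two
      exact h0.subtype _
    set T : ℝ := ∑' n : ℕ+, 1 / ((n : ℕ) : ℝ) ^ 2 with hT
    have hT0 : 0 ≤ T := tsum_nonneg fun n => by positivity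
    refine ⟨Real.sqrt T, ?_⟩
    intro x
    obtain ⟨l, rfl⟩ := Finsupp.mem_span_range_iff_exists_finsupp.mp (hmem x)
    rw [Finsupp.sum]
    set s := l.support
    set z : H := ∑ i ∈ s, (1 / ((i : ℕ) : ℂ)) • e i with hz
    have hinner : ⟪z, ∑ i ∈ s, l i • e i⟫_ℂ = b (∑ i ∈ s, l i • e i) := by
      rw [hz, he.inner_sum, map_sum]
      refine Finset.sum_congr rfl fun i _ => ?_
      rw [map_smul, hb i]
      have : (starRingEnd ℂ) (1 / ((i : ℕ) : ℂ)) = 1 / ((i : ℕ) : ℂ) := by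
        rw [map_div₀]; simp
      rw [this, smul_eq_mul]
      ring
    have hznorm : ‖z‖ ^ 2 ≤ T := by
      rw [hz, aux_norm_sq_sum he]
      calc ∑ i ∈ s, ‖1 / ((i : ℕ) : ℂ)‖ ^ 2
          = ∑ i ∈ s, 1 / ((i : ℕ) : ℝ) ^ 2 := by
            refine Finset.sum_congr rfl fun i _ => ?_
            rw [norm_div, norm_one, div_pow, one_pow]
            norm_num
        _ ≤ T := Summable.sum_le_tsum s (fun i _ => by positivity) hsum
    have hznorm' : ‖z‖ ≤ Real.sqrt T := by
      rw [← Real.sqrt_sq (norm_nonneg z)]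
      exact Real.sqrt_le_sqrt hznorm
    calc ‖b (∑ i ∈ s, l i • e i)‖ = ‖⟪z, ∑ i ∈ s, l i • e i⟫_ℂ‖ := by rw [hinner]
      _ ≤ ‖z‖ * ‖∑ i ∈ s, l i • e i‖ := norm_inner_le_norm _ _
      _ ≤ Real.sqrt T * ‖∑ i ∈ s, l i • e i‖ := by
          exact mul_le_mul_of_nonneg_right hznorm' (norm_nonneg _)
  · -- unboundedness of c
    rintro ⟨C, hC⟩
    have hC1 : 1 ≤ C := by
      have := hC (e (f 0))
      rw [hc (f 0)] at this
      simpa [he.1 (f 0)] using this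
    set N : ℕ := ⌈C ^ 2⌉₊ + 1 with hN
    have hNC : (C : ℝ) ^ 2 < N := by
      calc (C : ℝ) ^ 2 ≤ ⌈C ^ 2⌉₊ := Nat.le_ceil _
        _ < N := by exact_mod_cast Nat.lt_succ_self _
    have h1 := hC (X N)
    rw [hXc N] at h1
    have hXN : ‖X N‖ = Real.sqrt N := by
      have := hXnorm N
      rw [← this, Real.sqrt_sq (norm_nonneg _)]
    rw [hXN] at h1
    have hnorm : ‖((N : ℕ) : ℂ)‖ = (N : ℝ) := by
      simp
    rw [hnorm] at h1
    have hsqrt : Real.sqrt N * Real.sqrt N = N := Real.mul_self_sqrt (Nat.cast_nonneg N)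
    have hspos : 0 < Real.sqrt N := Real.sqrt_pos.mpr (by positivity)
    have h2 : Real.sqrt N ≤ C := by
      have : Real.sqrt N * Real.sqrt N ≤ C * Real.sqrt N := by rw [hsqrt]; exact h1
      exact le_of_mul_le_mul_right this hspos
    have h3 : (N : ℝ) ≤ C ^ 2 := by
      calc (N : ℝ) = Real.sqrt N * Real.sqrt N := hsqrt.symm
        _ ≤ C * C := by
            exact mul_le_mul h2 h2 hspos.le (le_trans (by linarith) h2)
        _ = C ^ 2 := (sq C).symm
    linarith
  · -- non-closeability
    have hX1 : ∀ k : ℕ, ‖X (k + 1)‖ = Real.sqrt ((k : ℝ) + 1) := by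
      intro k
      have h1 := hXnorm (k + 1)
      rw [← Real.sqrt_sq (norm_nonneg (X (k + 1))), h1]
      norm_num
    refine ⟨fun k => ((k + 1 : ℂ))⁻¹ • X (k + 1), ?_, ?_, one_ne_zero⟩
    · rw [tendsto_zero_iff_norm_tendsto_zero]
      have hnorm : ∀ k : ℕ, ‖((k + 1 : ℂ))⁻¹ • X (k + 1)‖ = (Real.sqrt ((k : ℝ) + 1))⁻¹ := by
        intro k
        rw [norm_smul, hX1 k, norm_inv]
        have hc : ‖(k + 1 : ℂ)‖ = (k : ℝ) + 1 := by
          rw [show ((k : ℂ) + 1) = ((k + 1 : ℕ) : ℂ) by push_cast; ring, Complex.norm_natCast]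
          push_cast; ring
        rw [hc]
        have hk : (0 : ℝ) < (k : ℝ) + 1 := by positivity
        rw [show ((k : ℝ) + 1) = Real.sqrt ((k : ℝ) + 1) * Real.sqrt ((k : ℝ) + 1) from
          (Real.mul_self_sqrt hk.le).symm]
        have hs : (0 : ℝ) < Real.sqrt ((k : ℝ) + 1) := Real.sqrt_pos.mpr hk
        field_simp
        rw [Real.sqrt_sq hs.le]
      have hsq : Filter.Tendsto (fun k : ℕ => Real.sqrt ((k : ℝ) + 1)) Filter.atTop
          Filter.atTop := by
        have h2 : Filter.Tendsto (fun k : ℕ => ((k : ℝ) + 1)) Filter.atTop Filter.atTop :=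
          Filter.tendsto_atTop_add_const_right _ 1 tendsto_natCast_atTop_atTop
        have h3 : Filter.Tendsto (fun x : ℝ => x ^ (1/2 : ℝ)) Filter.atTop Filter.atTop :=
          tendsto_rpow_atTop (by norm_num)
        refine (h3.comp h2).congr fun k => ?_
        simp only [Function.comp_apply]
        rw [Real.sqrt_eq_rpow]
      have := hsq.inv_tendsto_atTop
      refine this.congr fun k => ?_
      rw [hnorm k]
      simp [Pi.inv_apply]
    · have : ∀ k : ℕ, b (a (((k + 1 : ℂ))⁻¹ • X (k + 1))) = 1 := by
        intro k
        rw [map_smul, map_smul, smul_eq_mul, hXc (k + 1)]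
        have hk : ((k : ℂ) + 1) ≠ 0 := by
          exact_mod_cast Nat.cast_add_one_ne_zero (R := ℂ) k
        push_cast
        field_simp
      refine Filter.Tendsto.congr (fun k => (this k).symm) tendsto_const_nhds
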